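/- Let b > 0 and λ₀ > −b/8 with λ₀ ≠ 0, and v(τ) = −√(2b)·tanh(√(2b)·τ/2). Then there is no nontrivial solution (y,x) : ℝ → ℝ² of y' = −(v/4)y + λ₀x, x' = y + (v/4)x which is bounded on all of ℝ and tends to (0,0) as τ → ±∞. (Equivalently, the stable and unstable subspaces of this system at τ = 0 intersect trivially.) -/

import Mathlib

open Real Filter

lemma my_hasDerivAt_tanh (x : ℝ) : HasDerivAt Real.tanh (1 - Real.tanh x ^ 2) x := by
  have hc := Real.cosh_pos x
  have h : HasDerivAt (fun t => Real.sinh t / Real.cosh t)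
      ((Real.cosh x * Real.cosh x - Real.sinh x * Real.sinh x) / Real.cosh x ^ 2) x :=
    (Real.hasDerivAt_sinh x).div (Real.hasDerivAt_cosh x) hc.ne'
  have he : ∀ t, Real.tanh t = Real.sinh t / Real.cosh t := fun t => Real.tanh_eq_sinh_div_cosh t
  have : HasDerivAt Real.tanh
      ((Real.cosh x * Real.cosh x - Real.sinh x * Real.sinh x) / Real.cosh x ^ 2) x := by
    simpa [funext he] using h
  convert this using 1
  have hsq : Real.cosh x ^ 2 = Real.sinh x ^ 2 + 1 := Real.cosh_sq x
  rw [he]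
  field_simp

lemma my_tanh_sq_lt_one (x : ℝ) : Real.tanh x ^ 2 < 1 := by
  have hc := Real.cosh_pos x
  have hsq : Real.cosh x ^ 2 = Real.sinh x ^ 2 + 1 := Real.cosh_sq x
  rw [Real.tanh_eq_sinh_div_cosh, div_pow, div_lt_one (by positivity)]
  nlinarith

/-- For `λ₀ > −b/8`, `λ₀ ≠ 0`, there is no nontrivial bounded solution of
`y' = −(v/4)y + λ₀x`, `x' = y + (v/4)x` tending to `(0,0)` at `±∞`: any such solution
vanishes identically. -/
theorem stmt16 (b lam : ℝ) (hb : 0 < b) (hlam : lam > -b / 8) (hne : lam ≠ 0)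
    (v y x : ℝ → ℝ)
    (hv : v = fun τ => -Real.sqrt (2 * b) * Real.tanh (Real.sqrt (2 * b) * τ / 2))
    (hy : ∀ τ, HasDerivAt y (-(v τ / 4) * y τ + lam * x τ) τ)
    (hx : ∀ τ, HasDerivAt x (y τ + (v τ / 4) * x τ) τ)
    (hbdd : ∃ C : ℝ, ∀ τ, |y τ| + |x τ| ≤ C)
    (hlimTop : Filter.Tendsto (fun τ => (y τ, x τ)) Filter.atTop (nhds (0, 0)))
    (hlimBot : Filter.Tendsto (fun τ => (y τ, x τ)) Filter.atBot (nhds (0, 0))) :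
    ∀ τ, y τ = 0 ∧ x τ = 0 := by
  set c := Real.sqrt (2 * b) with hc
  have hc2 : c ^ 2 = 2 * b := Real.sq_sqrt (by linarith)
  have hcpos : 0 < c := Real.sqrt_pos.mpr (by linarith)
  -- derivative of v
  have hv' : ∀ τ, HasDerivAt v (v τ ^ 2 / 2 - b) τ := by
    intro τ
    have hinner : HasDerivAt (fun t : ℝ => c * t / 2) (c / 2) τ := by
      simpa using ((hasDerivAt_id τ).const_mul c).div_const 2
    have h1 : HasDerivAt (fun t => -c * Real.tanh (c * t / 2))
        (-c * ((1 - Real.tanh (c * τ / 2) ^ 2) * (c / 2))) τ :=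
      ((my_hasDerivAt_tanh (c * τ / 2)).comp τ hinner).const_mul (-c)
    rw [hv]
    convert h1 using 1
    have : (-c * Real.tanh (c * τ / 2)) ^ 2 = c ^ 2 * Real.tanh (c * τ / 2) ^ 2 := by ring
    rw [this, hc2]; ring_nf; nlinarith [hc2]
  -- |v| bound
  have hvsq : ∀ τ, v τ ^ 2 < 2 * b := by
    intro τ
    have ht := my_tanh_sq_lt_one (c * τ / 2)
    have h2 : v τ ^ 2 = c ^ 2 * Real.tanh (c * τ / 2) ^ 2 := by rw [hv]; ring
    rw [h2, hc2]
    nlinarith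
  -- derivative of yd
  set yd : ℝ → ℝ := fun τ => -(v τ / 4) * y τ + lam * x τ with hyd
  have hyd' : ∀ τ, HasDerivAt yd ((lam + b / 4 - v τ ^ 2 / 16) * y τ) τ := by
    intro τ
    have h1 : HasDerivAt (fun t => -(v t / 4) * y t + lam * x t)
        (-((v τ ^ 2 / 2 - b) / 4) * y τ + -(v τ / 4) * (-(v τ / 4) * y τ + lam * x τ)
          + lam * (y τ + v τ / 4 * x τ)) τ := by
      exact ((((hv' τ).div_const 4).neg.mul (hy τ)).add ((hx τ).const_mul lam))
    convert h1 using 1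
    ring
  -- p = y * yd
  set p : ℝ → ℝ := fun τ => y τ * yd τ with hp
  have hp' : ∀ τ, HasDerivAt p (yd τ ^ 2 + (lam + b / 4 - v τ ^ 2 / 16) * y τ ^ 2) τ := by
    intro τ
    have := (hy τ).mul (hyd' τ)
    convert this using 1
    show yd τ ^ 2 + (lam + b / 4 - v τ ^ 2 / 16) * y τ ^ 2
      = (-(v τ / 4) * y τ + lam * x τ) * yd τ + y τ * ((lam + b / 4 - v τ ^ 2 / 16) * y τ)
    rw [hyd]; ring
    all_goals rfl
  have hfpos : ∀ τ, 0 < lam + b / 4 - v τ ^ 2 / 16 := by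
    intro τ; have := hvsq τ; linarith
  -- p monotone
  have hmono : Monotone p := by
    apply monotone_of_deriv_nonneg (fun τ => (hp' τ).differentiableAt)
    intro τ
    rw [(hp' τ).deriv]
    have := hfpos τ
    nlinarith [sq_nonneg (yd τ), sq_nonneg (y τ)]
  -- limits
  have hytop : Tendsto y atTop (nhds 0) := by
    simpa [Function.comp_def] using (continuous_fst.tendsto _).comp hlimTop
  have hxtop : Tendsto x atTop (nhds 0) := by
    simpa [Function.comp_def] using (continuous_snd.tendsto _).comp hlimTop
  have hybot : Tendsto y atBot (nhds 0) := by
    simpa [Function.comp_def] using (continuous_fst.tendsto _).comp hlimBot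
  have hxbot : Tendsto x atBot (nhds 0) := by
    simpa [Function.comp_def] using (continuous_snd.tendsto _).comp hlimBot
  have hvle : ∀ τ, |v τ| ≤ c := by
    intro τ
    have h1 := hvsq τ
    rw [abs_le]
    constructor <;> nlinarith [sq_nonneg (v τ + c), sq_nonneg (v τ - c)]
  have hbound : ∀ τ, ‖p τ‖ ≤ |y τ| * (c / 4 * |y τ| + |lam| * |x τ|) := by
    intro τ
    rw [hp, Real.norm_eq_abs, abs_mul]
    apply mul_le_mul_of_nonneg_left _ (abs_nonneg _)
    rw [hyd]
    calc |(-(v τ / 4) * y τ + lam * x τ)| ≤ |(-(v τ / 4) * y τ)| + |lam * x τ| := abs_add_le _ _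
      _ ≤ c / 4 * |y τ| + |lam| * |x τ| := by
          rw [abs_mul, abs_mul, abs_neg, abs_div]
          have h4 : |(4:ℝ)| = (4:ℝ) := by norm_num
          rw [h4]
          gcongr
          exact hvle τ
  have hgtop : Tendsto (fun τ => |y τ| * (c / 4 * |y τ| + |lam| * |x τ|)) atTop (nhds 0) := by
    have := ((hytop.abs.const_mul (c/4)).add (hxtop.abs.const_mul |lam|)).mul hytop.abs
    simpa [mul_comm] using this
  have hgbot : Tendsto (fun τ => |y τ| * (c / 4 * |y τ| + |lam| * |x τ|)) atBot (nhds 0) := by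
    have := ((hybot.abs.const_mul (c/4)).add (hxbot.abs.const_mul |lam|)).mul hybot.abs
    simpa [mul_comm] using this
  have hptop : Tendsto p atTop (nhds 0) := squeeze_zero_norm hbound hgtop
  have hpbot : Tendsto p atBot (nhds 0) := squeeze_zero_norm hbound hgbot
  have hple : ∀ τ, p τ ≤ 0 := fun τ => hmono.ge_of_tendsto hptop τ
  have hpge : ∀ τ, 0 ≤ p τ := fun τ => hmono.le_of_tendsto hpbot τ
  have hp0 : p = fun _ => (0:ℝ) := funext fun τ => le_antisymm (hple τ) (hpge τ)
  intro τ
  have hD : yd τ ^ 2 + (lam + b / 4 - v τ ^ 2 / 16) * y τ ^ 2 = 0 := by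
    have h := hp' τ
    rw [hp0] at h
    exact h.unique (hasDerivAt_const τ 0)
  have hy0 : y τ = 0 := by
    by_contra h
    have hy2 : 0 < y τ ^ 2 := by positivity
    nlinarith [sq_nonneg (yd τ), mul_pos (hfpos τ) hy2]
  have hyd0 : yd τ = 0 := by
    have h2 := hD
    rw [hy0] at h2
    simp only [ne_eq, OfNat.ofNat_ne_zero, not_false_eq_true, zero_pow, mul_zero, add_zero] at h2
    exact pow_eq_zero_iff (by norm_num) |>.mp h2
  refine ⟨hy0, ?_⟩
  have hlx : lam * x τ = 0 := by
    have h3 : -(v τ / 4) * y τ + lam * x τ = 0 := hyd0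
    rw [hy0] at h3; linarith
  exact (mul_eq_zero.mp hlx).resolve_left hne
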